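/- The minimizer over σ² > 0 of ‖R̂⁻¹ − (σ² a aᴴ + I)⁻¹‖_F², with a unit vector a, is σ² = 1/(aᴴ R̂⁻¹ a) − 1, provided aᴴ R̂⁻¹ a ∈ (0,1). -/
import Mathlib

open Matrix Complex ComplexOrder

noncomputable def frobSq {M : ℕ} (A : Matrix (Fin M) (Fin M) ℂ) : ℝ :=
  ∑ i, ∑ j, Complex.normSq (A i j)

section aux

variable {M : ℕ} (a : Fin M → ℂ)

lemma PP_eq (ha : star a ⬝ᵥ a = 1) :
    Matrix.vecMulVec a (star a) * Matrix.vecMulVec a (star a) = Matrix.vecMulVec a (star a) := by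
  ext i j
  simp only [Matrix.mul_apply, Matrix.vecMulVec_apply, Pi.star_apply]
  have h2 : ∑ k, (a i * star (a k)) * (a k * star (a j))
      = (a i * star (a j)) * ∑ k, star (a k) * a k := by
    rw [Finset.mul_sum]; apply Finset.sum_congr rfl; intro k _; ring
  have h1 : (∑ k, star (a k) * a k) = 1 := ha
  rw [h2, h1, mul_one]

lemma inv_formula (ha : star a ⬝ᵥ a = 1) (s : ℝ) (hs : s + 1 ≠ 0) :
    ((s : ℂ) • Matrix.vecMulVec a (star a) + 1)⁻¹
      = 1 - ((s / (s + 1) : ℝ) : ℂ) • Matrix.vecMulVec a (star a) := by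
  apply Matrix.inv_eq_right_inv
  set P := Matrix.vecMulVec a (star a)
  have hP : P * P = P := PP_eq a ha
  have hsC : (s : ℂ) + 1 ≠ 0 := by
    exact_mod_cast fun h => hs (by exact_mod_cast h)
  have key : (s : ℂ) - ((s / (s + 1) : ℝ) : ℂ) - ((s / (s + 1) : ℝ) : ℂ) * (s : ℂ) = 0 := by
    push_cast
    field_simp
    ring
  have expand : ((s : ℂ) • P + 1) * (1 - ((s / (s + 1) : ℝ) : ℂ) • P)
      = 1 + ((s : ℂ) - ((s / (s + 1) : ℝ) : ℂ) - ((s / (s + 1) : ℝ) : ℂ) * (s : ℂ)) • P := by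
    rw [mul_sub, mul_one, Matrix.mul_smul, add_mul, Matrix.smul_mul, hP, one_mul, smul_add,
      smul_smul, sub_smul, sub_smul]
    abel
  rw [expand, key, zero_smul, add_zero]

end aux

theorem stmt_2 {M : ℕ} (Rh : Matrix (Fin M) (Fin M) ℂ) (hRh : Rh.PosDef)
    (a : Fin M → ℂ) (ha : star a ⬝ᵥ a = 1)
    (q : ℝ) (hq : q = (star a ⬝ᵥ Rh⁻¹ *ᵥ a).re) (hq0 : 0 < q) (hq1 : q < 1)
    (f : ℝ → ℝ)
    (hf : ∀ s : ℝ, f s =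
      frobSq (Rh⁻¹ - ((s : ℂ) • Matrix.vecMulVec a (star a) + 1)⁻¹)) :
    ∀ t : ℝ, 0 < t → f (1 / q - 1) ≤ f t := by
  set P := Matrix.vecMulVec a (star a) with hP
  set B : Matrix (Fin M) (Fin M) ℂ := Rh⁻¹ - 1 with hB
  -- norm of a squared
  have hna : ∑ i, Complex.normSq (a i) = 1 := by
    have h : (∑ i, ((Complex.normSq (a i) : ℂ))) = 1 := by
      rw [← ha]
      simp only [dotProduct, Pi.star_apply]
      exact Finset.sum_congr rfl fun i _ => Complex.normSq_eq_conj_mul_self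
    exact_mod_cast h
  -- quadratic expansion
  have hg : ∀ c : ℝ, frobSq (B + (c : ℂ) • P)
      = frobSq B + 2 * c * (q - 1) + c ^ 2 := by
    intro c
    have expand : ∀ i j, Complex.normSq ((B + (c : ℂ) • P) i j)
        = Complex.normSq (B i j) + 2 * (c * ((B i j) * star (P i j)).re)
          + c ^ 2 * (Complex.normSq (a i) * Complex.normSq (a j)) := by
      intro i j
      have hadd : (B + (c : ℂ) • P) i j = B i j + (c : ℂ) * P i j := by
        simp [Matrix.add_apply, Matrix.smul_apply]
      rw [hadd, Complex.normSq_add]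
      have hPij : P i j = a i * (starRingEnd ℂ) (a j) := rfl
      have h1 : Complex.normSq ((c : ℂ) * P i j)
          = c ^ 2 * (Complex.normSq (a i) * Complex.normSq (a j)) := by
        rw [hPij, Complex.normSq_mul, Complex.normSq_mul, Complex.normSq_ofReal,
          Complex.normSq_conj]
        ring
      have h2 : (B i j * (starRingEnd ℂ) ((c : ℂ) * P i j)).re
          = c * (B i j * star (P i j)).re := by
        rw [_root_.map_mul, Complex.conj_ofReal]
        have : B i j * ((c : ℂ) * (starRingEnd ℂ) (P i j))
            = (c : ℂ) * (B i j * (starRingEnd ℂ) (P i j)) := by ring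
        rw [this]
        simp only [Complex.mul_re, Complex.ofReal_re, Complex.ofReal_im, zero_mul, sub_zero]
        rfl
      rw [h1, h2]
      ring
    have hcross : ∑ i, ∑ j, (B i j * star (P i j)).re = q - 1 := by
      have e1 : ∑ i, ∑ j, (B i j * star (P i j)).re
          = (∑ i, ∑ j, (star (a i) * B i j * a j)).re := by
        rw [Complex.re_sum]
        apply Finset.sum_congr rfl; intro i _
        rw [Complex.re_sum]
        apply Finset.sum_congr rfl; intro j _
        congr 1
        have hPij : star (P i j) = star (a i) * a j := by
          simp only [hP, Matrix.vecMulVec_apply, Pi.star_apply, star_mul', star_star]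
        rw [hPij]; ring
      have e2 : (∑ i, ∑ j, (star (a i) * B i j * a j)) = star a ⬝ᵥ B *ᵥ a := by
        simp only [dotProduct, Matrix.mulVec, dotProduct, Pi.star_apply, Finset.mul_sum]
        apply Finset.sum_congr rfl; intro i _
        apply Finset.sum_congr rfl; intro j _
        ring
      rw [e1, e2, hB, Matrix.sub_mulVec, dotProduct_sub, Matrix.one_mulVec, ha]
      simp [hq]
    have hquad : ∑ i, ∑ j, Complex.normSq (a i) * Complex.normSq (a j) = 1 := by
      have : ∑ i, ∑ j, Complex.normSq (a i) * Complex.normSq (a j)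
          = (∑ i, Complex.normSq (a i)) * (∑ j, Complex.normSq (a j)) := by
        rw [Finset.sum_mul]
        exact Finset.sum_congr rfl fun i _ => (Finset.mul_sum _ _ _).symm
      rw [this, hna, one_mul]
    simp only [frobSq]
    rw [show (∑ i, ∑ j, Complex.normSq ((B + (c : ℂ) • P) i j))
        = ∑ i, ∑ j, (Complex.normSq (B i j) + 2 * (c * ((B i j) * star (P i j)).re)
          + c ^ 2 * (Complex.normSq (a i) * Complex.normSq (a j))) from
      Finset.sum_congr rfl fun i _ => Finset.sum_congr rfl fun j _ => expand i j]
    have split : ∑ i, ∑ j, (Complex.normSq (B i j) + 2 * (c * ((B i j) * star (P i j)).re)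
          + c ^ 2 * (Complex.normSq (a i) * Complex.normSq (a j)))
        = (∑ i, ∑ j, Complex.normSq (B i j))
          + 2 * c * (∑ i, ∑ j, ((B i j) * star (P i j)).re)
          + c ^ 2 * (∑ i, ∑ j, Complex.normSq (a i) * Complex.normSq (a j)) := by
      have A1 : ∑ i, ∑ j, 2 * (c * ((B i j) * star (P i j)).re)
          = 2 * c * (∑ i, ∑ j, ((B i j) * star (P i j)).re) := by
        rw [Finset.mul_sum]
        apply Finset.sum_congr rfl; intro i _
        rw [Finset.mul_sum]
        apply Finset.sum_congr rfl; intro j _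
        ring
      have A2 : ∑ i, ∑ j, c ^ 2 * (Complex.normSq (a i) * Complex.normSq (a j))
          = c ^ 2 * (∑ i, ∑ j, Complex.normSq (a i) * Complex.normSq (a j)) := by
        rw [Finset.mul_sum]
        apply Finset.sum_congr rfl; intro i _
        rw [Finset.mul_sum]
      simp only [Finset.sum_add_distrib]
      rw [A1, A2]
    rw [split, hcross, hquad]
    ring
  -- rewrite f via the quadratic
  have hfc : ∀ s : ℝ, s + 1 ≠ 0 →
      f s = frobSq B + 2 * (s / (s + 1)) * (q - 1) + (s / (s + 1)) ^ 2 := by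
    intro s hs
    rw [hf s, inv_formula a ha s hs]
    have e3 : Rh⁻¹ - (1 - ((s / (s + 1) : ℝ) : ℂ) • P) = B + ((s / (s + 1) : ℝ) : ℂ) • P := by
      rw [hB]; abel
    rw [e3, hg]
  intro t ht
  have ht1 : t + 1 ≠ 0 := by positivity
  have hs0 : (1 / q - 1) + 1 = 1 / q := by ring
  have hs1 : (1 / q - 1) + 1 ≠ 0 := by rw [hs0]; positivity
  have hc0 : (1 / q - 1) / ((1 / q - 1) + 1) = 1 - q := by
    rw [hs0]; field_simp
  rw [hfc t ht1, hfc _ hs1, hc0]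
  set c := t / (t + 1)
  nlinarith [sq_nonneg (c - (1 - q))]
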